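/- Let (N, v) be a simple game with n players, collection of winning coalitions 𝒲 and collection of losing coalitions 𝓛. Suppose that for every p ∈ Q(𝒲) there exists a losing coalition C with p(C) ≥ n/4 (i.e., the critical threshold value α equals n/4). Then (2/n)𝟙 lies in the convex hull of the characteristic vectors of the winning coalitions and (1/2)𝟙 lies in the convex hull of the characteristic vectors of the losing coalitions. -/

import Mathlib

namespace GameAux

variable {ι : Type*} [Fintype ι]

/-- dot product on `ι → ℝ`. -/
def dp (x y : ι → ℝ) : ℝ := ∑ i, x i * y i

lemma dp_add_right (p x y : ι → ℝ) : dp p (x + y) = dp p x + dp p y := by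
  simp [dp, mul_add, Finset.sum_add_distrib]

lemma dp_smul_right (p : ι → ℝ) (t : ℝ) (x : ι → ℝ) : dp p (t • x) = t * dp p x := by
  simp only [dp, Pi.smul_apply, smul_eq_mul, Finset.mul_sum]; exact Finset.sum_congr rfl fun i _ => by ring

lemma dp_zero_right (p : ι → ℝ) : dp p (0 : ι → ℝ) = 0 := by simp [dp]

lemma dp_sub_right (p x y : ι → ℝ) : dp p (x - y) = dp p x - dp p y := by
  simp [dp, mul_sub, Finset.sum_sub_distrib]

lemma dp_sub_left (x y p : ι → ℝ) : dp (x - y) p = dp x p - dp y p := by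
  simp [dp, sub_mul, Finset.sum_sub_distrib]

lemma dp_smul_left (t : ℝ) (x p : ι → ℝ) : dp (t • x) p = t * dp x p := by
  simp only [dp, Pi.smul_apply, smul_eq_mul, Finset.mul_sum]; exact Finset.sum_congr rfl fun i _ => by ring

lemma dp_self_pos {b : ι → ℝ} (hb : b ≠ 0) : 0 < dp b b := by
  have h : ∃ i, b i ≠ 0 := by
    by_contra h
    push_neg at h
    exact hb (funext h)
  obtain ⟨i, hi⟩ := h
  have : ∀ j ∈ (Finset.univ : Finset ι), 0 ≤ b j * b j := fun j _ => mul_self_nonneg _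
  refine Finset.sum_pos' this ⟨i, Finset.mem_univ i, ?_⟩
  exact mul_self_pos.mpr hi

/-- The conical hull of a list of vectors. -/
def coneL : List (ι → ℝ) → Set (ι → ℝ)
  | [] => {0}
  | a :: l => {x | ∃ t : ℝ, 0 ≤ t ∧ ∃ y ∈ coneL l, x = t • a + y}

lemma dp_nonpos_of_mem_coneL {p : ι → ℝ} :
    ∀ {l : List (ι → ℝ)} {x : ι → ℝ}, x ∈ coneL l → (∀ v ∈ l, dp p v ≤ 0) → dp p x ≤ 0 := by
  intro l
  induction l with
  | nil => intro x hx _; simp only [coneL, Set.mem_singleton_iff] at hx; simp [hx, dp_zero_right]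
  | cons a l ih =>
    intro x hx hl
    obtain ⟨t, ht, y, hy, rfl⟩ := hx
    rw [dp_add_right, dp_smul_right]
    have h1 : dp p a ≤ 0 := hl a List.mem_cons_self
    have h2 : dp p y ≤ 0 := ih hy (fun v hv => hl v (List.mem_cons_of_mem a hv))
    nlinarith

lemma coneL_shift (a : ι → ℝ) (g : (ι → ℝ) → ℝ) :
    ∀ (l : List (ι → ℝ)) (x : ι → ℝ), x ∈ coneL (l.map (fun v => v - g v • a)) →
      ∃ u : ℝ, x + u • a ∈ coneL l := by
  intro l
  induction l with
  | nil => intro x hx; exact ⟨0, by simpa using hx⟩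
  | cons v l ih =>
    intro x hx
    obtain ⟨t, ht, y, hy, rfl⟩ := hx
    obtain ⟨u, hu⟩ := ih y hy
    refine ⟨u + t * g v, t, ht, y + u • a, hu, ?_⟩
    simp only [smul_sub, smul_smul]
    module

theorem farkas_list (l : List (ι → ℝ)) (b : ι → ℝ) :
    b ∈ coneL l ∨ ∃ p : ι → ℝ, (∀ a ∈ l, dp p a ≤ 0) ∧ 0 < dp p b := by
  generalize hn : l.length = n
  induction n using Nat.strong_induction_on generalizing l b with
  | _ n ih =>
  match l, hn with
  | [], _ =>
    by_cases hb : b = 0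
    · exact Or.inl (by simp [coneL, hb])
    · exact Or.inr ⟨b, by simp, dp_self_pos hb⟩
  | a :: l, hn =>
    have hlen : l.length < n := by simp [← hn]
    rcases ih l.length hlen l b rfl with hb | ⟨p, hpl, hpb⟩
    · left
      exact ⟨0, le_refl 0, b, hb, by simp⟩
    by_cases hpa : dp p a ≤ 0
    · right
      refine ⟨p, ?_, hpb⟩
      intro x hx
      rcases List.mem_cons.mp hx with rfl | hx
      · exact hpa
      · exact hpl x hx
    push_neg at hpa
    -- project onto the hyperplane dp p · = 0
    set f : (ι → ℝ) → (ι → ℝ) := fun v => v - (dp p v / dp p a) • a with hf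
    have hmlen : (l.map f).length < n := by simp [← hn]
    rcases ih (l.map f).length hmlen (l.map f) (f b) rfl with hb | ⟨q, hql, hqb⟩
    · -- b ∈ cone (a :: l)
      left
      obtain ⟨u, hu⟩ := coneL_shift a (fun v => dp p v / dp p a) l (f b) hb
      have hdp : dp p (f b + u • a) ≤ 0 := dp_nonpos_of_mem_coneL hu hpl
      have hfb : dp p (f b) = 0 := by
        rw [hf]
        simp only [dp_sub_right, dp_smul_right]
        field_simp
        ring
      rw [dp_add_right, hfb, dp_smul_right, zero_add] at hdp
      have hu0 : u ≤ 0 := by nlinarith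
      refine ⟨dp p b / dp p a - u, ?_, f b + u • a, hu, ?_⟩
      · have : 0 < dp p b / dp p a := div_pos hpb hpa
        linarith
      · rw [hf]
        simp only [sub_smul]
        abel
    · -- transfer the separating functional
      right
      refine ⟨q - (dp q a / dp p a) • p, ?_, ?_⟩
      · intro x hx
        rcases List.mem_cons.mp hx with rfl | hx
        · rw [dp_sub_left, dp_smul_left]
          field_simp
          simp
        · have hx' : dp q (f x) ≤ 0 := hql (f x) (List.mem_map_of_mem hx)
          rw [hf] at hx'
          rw [dp_sub_left, dp_smul_left]
          have hpx : dp p x ≤ 0 := hpl x hx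
          rw [dp_sub_right, dp_smul_right] at hx'
          have e : dp q x - dp q a / dp p a * dp p x = dp q x - dp p x / dp p a * dp q a := by
            ring
          rw [e]
          exact hx'
      · have hb' : dp q (f b) > 0 := hqb
        rw [hf, dp_sub_right, dp_smul_right] at hb'
        rw [dp_sub_left, dp_smul_left]
        have e : dp q b - dp q a / dp p a * dp p b = dp q b - dp p b / dp p a * dp q a := by
          ring
        rw [e]
        exact hb'


lemma coneL_map_coeff {κ : Type*} [Fintype κ] [DecidableEq κ] (A : κ → ι → ℝ) :
    ∀ (l : List κ) (x : ι → ℝ), x ∈ coneL (l.map A) →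
      ∃ c : κ → ℝ, (∀ j, 0 ≤ c j) ∧ x = ∑ j, c j • A j := by
  intro l
  induction l with
  | nil =>
    intro x hx
    refine ⟨0, fun j => le_refl 0, ?_⟩
    simp only [coneL, Set.mem_singleton_iff, List.map_nil] at hx
    simp [hx]
  | cons j0 l ih =>
    intro x hx
    obtain ⟨t, ht, y, hy, rfl⟩ := hx
    obtain ⟨c, hc, rfl⟩ := ih y hy
    refine ⟨fun j => c j + if j = j0 then t else 0, fun j => add_nonneg (hc j) (by split <;> simp [ht]), ?_⟩
    have : ∑ j, (c j + if j = j0 then t else 0) • A j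
        = ∑ j, c j • A j + ∑ j, (if j = j0 then t else 0) • A j := by
      rw [← Finset.sum_add_distrib]
      exact Finset.sum_congr rfl fun j _ => by rw [add_smul]
    rw [this]
    have : ∑ j, (if j = j0 then t else 0) • A j = t • A j0 := by
      rw [Finset.sum_eq_single j0]
      · simp
      · intro b _ hb; simp [hb]
      · intro h; exact absurd (Finset.mem_univ j0) h
    rw [this]
    abel

theorem farkas_family {κ : Type*} [Fintype κ] [DecidableEq κ] (A : κ → ι → ℝ) (b : ι → ℝ) :
    (∃ c : κ → ℝ, (∀ j, 0 ≤ c j) ∧ b = ∑ j, c j • A j) ∨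
      ∃ p : ι → ℝ, (∀ j, dp p (A j) ≤ 0) ∧ 0 < dp p b := by
  rcases farkas_list ((Finset.univ : Finset κ).toList.map A) b with hb | ⟨p, hp, hpb⟩
  · exact Or.inl (coneL_map_coeff A _ b hb)
  · refine Or.inr ⟨p, fun j => hp (A j) ?_, hpb⟩
    exact List.mem_map_of_mem (by simp [Finset.mem_toList])

end GameAux

namespace GameAux

variable {N : Type*} [Fintype N] [DecidableEq N]

/-- characteristic vector of a coalition. -/
def chi (C : Finset N) : N → ℝ := fun i => if i ∈ C then 1 else 0

lemma sum_mul_chi (C : Finset N) (f : N → ℝ) : ∑ i, f i * chi C i = ∑ i ∈ C, f i := by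
  simp [chi, mul_ite, mul_one, mul_zero, Finset.sum_ite_mem]

/-- losing-coalition generator. -/
def AL (v : Finset N → ℕ) (C : Finset N) : Option (Option N) → ℝ := fun o =>
  if v C = 0 then Option.elim o 1 (fun o' => Option.elim o' 0 (chi C)) else 0

/-- winning-coalition generator. -/
def AW (v : Finset N → ℕ) (C : Finset N) : Option (Option N) → ℝ := fun o =>
  if v C = 1 then Option.elim o 0 (fun o' => Option.elim o' 1 (fun i => - chi C i)) else 0

/-- coordinate slack generator. -/
def AS (i0 : N) : Option (Option N) → ℝ := fun o => if o = some (some i0) then -1 else 0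

/-- value slack generator. -/
def AR : Option (Option N) → ℝ := fun o => if o = some none then -1 else 0

/-- right hand side. -/
def Bvec (n4 : ℝ) : Option (Option N) → ℝ := fun o =>
  Option.elim o 1 (fun o' => Option.elim o' n4 (fun _ => 0))

def Agen (v : Finset N → ℕ) : (Finset N ⊕ Finset N) ⊕ Option N → Option (Option N) → ℝ :=
  fun j => match j with
  | .inl (.inl C) => AL v C
  | .inl (.inr C) => AW v C
  | .inr none => AR
  | .inr (some i) => AS i

lemma dp_expand (p x : Option (Option N) → ℝ) :
    dp p x = p none * x none + (p (some none) * x (some none)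
      + ∑ i, p (some (some i)) * x (some (some i))) := by
  rw [dp, Fintype.sum_option, Fintype.sum_option]

lemma dp_AS (p : Option (Option N) → ℝ) (i0 : N) : dp p (AS i0) = - p (some (some i0)) := by
  rw [dp_expand]
  simp [AS, mul_ite, Finset.sum_ite_eq']

lemma dp_AR (p : Option (Option N) → ℝ) : dp p (AR : Option (Option N) → ℝ) = - p (some none) := by
  rw [dp_expand]
  simp [AR]

lemma dp_AL (v : Finset N → ℕ) (p : Option (Option N) → ℝ) {C : Finset N} (hC : v C = 0) :
    dp p (AL v C) = p none + ∑ i ∈ C, p (some (some i)) := by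
  rw [dp_expand]
  simp only [AL, hC, if_pos, Option.elim]
  rw [sum_mul_chi]
  ring

lemma dp_AW (v : Finset N → ℕ) (p : Option (Option N) → ℝ) {C : Finset N} (hC : v C = 1) :
    dp p (AW v C) = p (some none) - ∑ i ∈ C, p (some (some i)) := by
  rw [dp_expand]
  have : ∀ i, p (some (some i)) * (- chi C i) = - (p (some (some i)) * chi C i) := fun i => by ring
  simp only [AW, hC, if_pos, Option.elim, this, Finset.sum_neg_distrib, sum_mul_chi]
  ring

lemma dp_Bvec (p : Option (Option N) → ℝ) (n4 : ℝ) :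
    dp p (Bvec n4) = p none + p (some none) * n4 := by
  rw [dp_expand]
  simp [Bvec]

theorem dual_exists (v : Finset N → ℕ) (hempty : v (∅ : Finset N) = 0)
    (halpha : ∀ p : N → ℝ,
      ((∀ i, 0 ≤ p i) ∧ (∀ C : Finset N, v C = 1 → 1 ≤ ∑ i ∈ C, p i)) →
      ∃ C : Finset N, v C = 0 ∧ (Fintype.card N : ℝ) / 4 ≤ ∑ i ∈ C, p i) :
    ∃ y z : Finset N → ℝ,
      (∀ C, 0 ≤ y C) ∧ (∀ C, 0 ≤ z C) ∧
      (∀ C, y C ≠ 0 → v C = 1) ∧ (∀ C, z C ≠ 0 → v C = 0) ∧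
      (∑ C, z C) = 1 ∧
      (Fintype.card N : ℝ) / 4 ≤ ∑ C, y C ∧
      (∀ i : N, ∑ C, y C * chi C i ≤ ∑ C, z C * chi C i) := by
  classical
  set n : ℝ := (Fintype.card N : ℝ) with hn
  rcases farkas_family (Agen v) (Bvec (n / 4)) with ⟨c, hc, hbc⟩ | ⟨p, hpA, hpb⟩
  · -- dual solution exists
    set y : Finset N → ℝ := fun C => if v C = 1 then c (.inl (.inr C)) else 0 with hy
    set z : Finset N → ℝ := fun C => if v C = 0 then c (.inl (.inl C)) else 0 with hz
    have hbco : ∀ o : Option (Option N), Bvec (n / 4) o =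
        ∑ C : Finset N, c (.inl (.inl C)) * AL v C o
        + ∑ C : Finset N, c (.inl (.inr C)) * AW v C o
        + (c (.inr none) * AR o + ∑ i, c (.inr (some i)) * AS i o) := by
      intro o
      have h := congrFun hbc o
      rw [Finset.sum_apply] at h
      rw [Fintype.sum_sum_type, Fintype.sum_sum_type, Fintype.sum_option] at h
      simpa [Agen] using h
    refine ⟨y, z,
        fun C => by rw [hy]; dsimp only; split <;> simp [hc _],
        fun C => by rw [hz]; dsimp only; split <;> simp [hc _],
        fun C h => by by_contra h1; rw [hy] at h; simp [h1] at h,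
        fun C h => by by_contra h1; rw [hz] at h; simp [h1] at h, ?_, ?_, ?_⟩
    · -- sum z = 1
      have h := hbco none
      have e1 : ∀ C ∈ (Finset.univ : Finset (Finset N)),
          c (.inl (.inl C)) * AL v C none = z C := by
        intro C _
        by_cases hC : v C = 0 <;> simp [AL, hC, hz]
      have e2 : ∀ C ∈ (Finset.univ : Finset (Finset N)),
          c (.inl (.inr C)) * AW v C none = 0 := by
        intro C _; simp [AW]
      rw [Finset.sum_congr rfl e1, Finset.sum_congr rfl e2] at h
      simpa [Bvec, AR, AS] using h.symm
    · -- n/4 ≤ sum y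
      have h := hbco (some none)
      have e1 : ∀ C ∈ (Finset.univ : Finset (Finset N)),
          c (.inl (.inl C)) * AL v C (some none) = 0 := by
        intro C _; simp [AL]
      have e2 : ∀ C ∈ (Finset.univ : Finset (Finset N)),
          c (.inl (.inr C)) * AW v C (some none) = y C := by
        intro C _
        by_cases hC : v C = 1 <;> simp [AW, hC, hy]
      rw [Finset.sum_congr rfl e1, Finset.sum_congr rfl e2] at h
      simp only [Bvec, AR, AS, Option.elim] at h
      have h' : n / 4 = (∑ C, y C) - c (.inr none) := by
        rw [h]; simp [sub_eq_add_neg]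
      have := hc (.inr none)
      rw [h']
      linarith
    · -- coordinatewise
      intro i
      have h := hbco (some (some i))
      have e1 : ∀ C ∈ (Finset.univ : Finset (Finset N)),
          c (.inl (.inl C)) * AL v C (some (some i)) = z C * chi C i := by
        intro C _
        by_cases hC : v C = 0 <;> simp [AL, hC, hz]
      have e2 : ∀ C ∈ (Finset.univ : Finset (Finset N)),
          c (.inl (.inr C)) * AW v C (some (some i)) = - (y C * chi C i) := by
        intro C _
        by_cases hC : v C = 1 <;> simp [AW, hC, hy]
      rw [Finset.sum_congr rfl e1, Finset.sum_congr rfl e2] at h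
      simp only [Bvec, AR, AS, Option.elim, Finset.sum_neg_distrib] at h
      have hsl : ∑ i', c (.inr (some i')) * (if some (some i) = some (some i') then (-1:ℝ) else 0)
          = - c (.inr (some i)) := by
        simp [mul_ite, Finset.sum_ite_eq']
      rw [hsl] at h
      have := hc (.inr (some i))
      have h' : (0:ℝ) = ∑ C, z C * chi C i - ∑ C, y C * chi C i - c (.inr (some i)) := by
        rw [h]; simp; ring
      linarith
  · -- separating functional contradicts halpha
    exfalso
    have hqn : ∀ i, 0 ≤ p (some (some i)) := by
      intro i
      have := hpA (.inr (some i))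
      rw [show Agen v (Sum.inr (some i)) = AS i from rfl, dp_AS] at this
      linarith
    have hd : 0 ≤ p (some none) := by
      have := hpA (.inr none)
      rw [show Agen v (Sum.inr none) = AR from rfl, dp_AR] at this
      linarith
    have hL : ∀ C : Finset N, v C = 0 → p none + ∑ i ∈ C, p (some (some i)) ≤ 0 := by
      intro C hC
      have := hpA (.inl (.inl C))
      rwa [show Agen v (Sum.inl (Sum.inl C)) = AL v C from rfl, dp_AL v p hC] at this
    have hW : ∀ C : Finset N, v C = 1 → p (some none) ≤ ∑ i ∈ C, p (some (some i)) := by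
      intro C hC
      have := hpA (.inl (.inr C))
      rw [show Agen v (Sum.inl (Sum.inr C)) = AW v C from rfl, dp_AW v p hC] at this
      linarith
    rw [dp_Bvec] at hpb
    have hcz : p none ≤ 0 := by
      have := hL ∅ hempty
      simpa using this
    have hdpos : 0 < p (some none) := by
      rcases lt_or_eq_of_le hd with h | h
      · exact h
      · exfalso; rw [← h] at hpb; simp at hpb; linarith
    obtain ⟨C0, hC0, hge⟩ := halpha (fun i => p (some (some i)) / p (some none))
      ⟨fun i => div_nonneg (hqn i) hd, fun C hC => by
        rw [← Finset.sum_div]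
        rw [le_div_iff₀ hdpos, one_mul]
        exact hW C hC⟩
    rw [← Finset.sum_div, le_div_iff₀ hdpos] at hge
    have h1 := hL C0 hC0
    nlinarith

end GameAux

namespace GameAux

variable {N : Type*} [Fintype N] [DecidableEq N]

lemma swapS (S : Finset N) (f : Finset N → ℝ) :
    ∑ i ∈ S, ∑ C, f C * chi C i = ∑ C, f C * ((S ∩ C).card : ℝ) := by
  rw [Finset.sum_comm]
  refine Finset.sum_congr rfl fun C _ => ?_
  rw [← Finset.mul_sum]
  congr 1
  simp [chi, Finset.sum_ite_mem]

lemma swap2 (f : Finset N → ℝ) (g : N → ℝ) :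
    ∑ C, f C * ∑ i ∈ C, g i = ∑ i, g i * ∑ C, f C * chi C i := by
  have e : ∀ C ∈ (Finset.univ : Finset (Finset N)),
      f C * ∑ i ∈ C, g i = ∑ i, f C * (g i * chi C i) := by
    intro C _
    rw [← sum_mul_chi C g, Finset.mul_sum]
  rw [Finset.sum_congr rfl e, Finset.sum_comm]
  refine Finset.sum_congr rfl fun i _ => ?_
  rw [Finset.mul_sum]
  exact Finset.sum_congr rfl fun C _ => by ring

end GameAux

/-- For a simple game `(N, v)` with `n` players: if for every `p ∈ Q(𝒲)` there
exists a losing coalition `C` with `p(C) ≥ n / 4` (i.e. the critical threshold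
value `α` equals `n / 4`), then `(2/n)𝟙` lies in the convex hull of the
characteristic vectors of the winning coalitions and `(1/2)𝟙` lies in the convex
hull of the characteristic vectors of the losing coalitions. -/
theorem convex_hull_conditions_of_critical_threshold_eq
    {N : Type*} [Fintype N] [DecidableEq N] (v : Finset N → ℕ)
    (hv01 : ∀ C, v C = 0 ∨ v C = 1)
    (hmono : ∀ C S : Finset N, C ⊆ S → v C ≤ v S)
    (hempty : v (∅ : Finset N) = 0)
    (hfull : v (Finset.univ : Finset N) = 1)
    (halpha : ∀ p : N → ℝ,
      ((∀ i, 0 ≤ p i) ∧ (∀ C : Finset N, v C = 1 → 1 ≤ ∑ i ∈ C, p i)) →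
      ∃ C : Finset N, v C = 0 ∧ (Fintype.card N : ℝ) / 4 ≤ ∑ i ∈ C, p i) :
    (fun _ : N => 2 / (Fintype.card N : ℝ)) ∈
      convexHull ℝ {x : N → ℝ | ∃ C : Finset N, v C = 1 ∧
        x = fun i => if i ∈ C then 1 else 0} ∧
    (fun _ : N => (1 : ℝ) / 2) ∈
      convexHull ℝ {x : N → ℝ | ∃ C : Finset N, v C = 0 ∧
        x = fun i => if i ∈ C then 1 else 0} := by
  classical
  open GameAux in
  obtain ⟨y, z, hy0, hz0, hyW, hzL, hz1, hyY, hcoord⟩ := GameAux.dual_exists v hempty halpha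
  set n : ℝ := (Fintype.card N : ℝ) with hn
  have hn1 : 0 < Fintype.card N := by
    rcases Nat.eq_zero_or_pos (Fintype.card N) with h | h
    · exfalso
      have huniv : (Finset.univ : Finset N) = ∅ := by
        rw [← Finset.card_eq_zero, Finset.card_univ, h]
      rw [huniv, hempty] at hfull
      exact absurd hfull (by norm_num)
    · exact h
  have hnR : (0:ℝ) < n := by rw [hn]; exact_mod_cast hn1
  set t : N → ℝ := fun i => ∑ C, z C * GameAux.chi C i with ht
  set r : N → ℝ := fun i => ∑ C, y C * GameAux.chi C i with hr
  set Y : ℝ := ∑ C, y C with hY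
  have hrt : ∀ i, r i ≤ t i := hcoord
  -- Step A : for every losing C, Y ≤ ∑_{i ∉ C} r i
  have stepA : ∀ C : Finset N, v C = 0 → Y ≤ ∑ i ∈ Cᶜ, r i := by
    intro C hC
    have : ∑ i ∈ Cᶜ, r i = ∑ W, y W * ((Cᶜ ∩ W).card : ℝ) := GameAux.swapS Cᶜ y
    rw [this]
    refine Finset.sum_le_sum fun W _ => ?_
    by_cases hyw : y W = 0
    · simp [hyw]
    · have hW1 : v W = 1 := hyW W hyw
      have hnsub : ¬ W ⊆ C := by
        intro hsub
        have := hmono W C hsub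
        rw [hC, hW1] at this
        omega
      obtain ⟨a, haW, haC⟩ := Finset.not_subset.mp hnsub
      have hne : (Cᶜ ∩ W).Nonempty := ⟨a, Finset.mem_inter.mpr ⟨Finset.mem_compl.mpr haC, haW⟩⟩
      have hcard : (1:ℝ) ≤ ((Cᶜ ∩ W).card : ℝ) := by
        exact_mod_cast Finset.Nonempty.card_pos hne
      exact le_mul_of_one_le_right (hy0 W) hcard
  -- Step B : for every losing C, Y ≤ ∑_{i ∉ C} t i
  have stepB : ∀ C : Finset N, v C = 0 → Y ≤ ∑ i ∈ Cᶜ, t i := by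
    intro C hC
    exact (stepA C hC).trans (Finset.sum_le_sum fun i _ => hrt i)
  -- sum over complement identity
  have hcompl : ∀ (g : N → ℝ) (C : Finset N), ∑ i ∈ Cᶜ, g i = (∑ i, g i) - ∑ i ∈ C, g i := by
    intro g C
    have := Finset.sum_add_sum_compl C g
    linarith
  -- key swap : ∑_C z C * ∑_{i ∈ C} t i = ∑ i, t i * t i
  have hzt : ∑ C, z C * ∑ i ∈ C, t i = ∑ i, t i * t i := GameAux.swap2 z t
  -- Step C : Y ≤ ∑ t − ∑ t²
  have stepC : Y ≤ (∑ i, t i) - ∑ i, t i * t i := by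
    have h1 : ∀ C ∈ (Finset.univ : Finset (Finset N)),
        z C * Y ≤ z C * ∑ i ∈ Cᶜ, t i := by
      intro C _
      by_cases hzc : z C = 0
      · simp [hzc]
      · exact mul_le_mul_of_nonneg_left (stepB C (hzL C hzc)) (hz0 C)
    have h2 : Y = ∑ C, z C * Y := by
      rw [← Finset.sum_mul, hz1, one_mul]
    have h3 : ∑ C, z C * ∑ i ∈ Cᶜ, t i
        = (∑ i, t i) - ∑ i, t i * t i := by
      have e : ∀ C ∈ (Finset.univ : Finset (Finset N)),
          z C * ∑ i ∈ Cᶜ, t i = z C * (∑ i, t i) - z C * ∑ i ∈ C, t i := by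
        intro C _
        rw [hcompl t C]
        ring
      rw [Finset.sum_congr rfl e, Finset.sum_sub_distrib, ← Finset.sum_mul, hz1, one_mul, hzt]
    calc Y = ∑ C, z C * Y := h2
      _ ≤ ∑ C, z C * ∑ i ∈ Cᶜ, t i := Finset.sum_le_sum h1
      _ = (∑ i, t i) - ∑ i, t i * t i := h3
  -- Step D : t i = 1/2 for all i
  have hexp : ∑ i, (t i - 1/2)^2 = (∑ i, t i * t i) - (∑ i, t i) + n/4 := by
    have e : ∀ i ∈ (Finset.univ : Finset N),
        (t i - 1/2)^2 = t i * t i - t i + 1/4 := fun i _ => by ring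
    rw [Finset.sum_congr rfl e]
    rw [Finset.sum_add_distrib, Finset.sum_sub_distrib, Finset.sum_const, Finset.card_univ,
      nsmul_eq_mul, hn]
    ring
  have hsq0 : ∑ i, (t i - 1/2)^2 = 0 := by
    have hle : ∑ i, (t i - 1/2)^2 ≤ 0 := by
      rw [hexp]
      have := hyY
      linarith [stepC]
    have hge : 0 ≤ ∑ i, (t i - 1/2)^2 := Finset.sum_nonneg fun i _ => sq_nonneg _
    linarith
  have hthalf : ∀ i, t i = 1/2 := by
    intro i
    have := (Finset.sum_eq_zero_iff_of_nonneg (fun i _ => sq_nonneg (t i - 1/2))).mp hsq0 i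
      (Finset.mem_univ i)
    have h2 : t i - 1/2 = 0 := by
      exact pow_eq_zero_iff (n := 2) (by norm_num) |>.mp this
    linarith
  have hsumt : ∑ i, t i = n/2 := by
    rw [Finset.sum_congr rfl fun i _ => hthalf i, Finset.sum_const, Finset.card_univ,
      nsmul_eq_mul, hn]
    ring
  have hsumtt : ∑ i, t i * t i = n/4 := by
    have e : ∀ i ∈ (Finset.univ : Finset N), t i * t i = 1/4 := by
      intro i _; rw [hthalf i]; norm_num
    rw [Finset.sum_congr rfl e, Finset.sum_const, Finset.card_univ, nsmul_eq_mul, hn]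
    ring
  have hYn4 : Y = n/4 := by
    have h1 : Y ≤ n/4 := by
      have := stepC
      rw [hsumt, hsumtt] at this
      linarith
    have h2 : n/4 ≤ Y := hyY
    linarith
  -- Step F : r i = 1/2 for all i
  have stepF : ∀ i, r i = 1/2 := by
    have h1 : ∀ C ∈ (Finset.univ : Finset (Finset N)),
        z C * ((∑ i ∈ Cᶜ, t i) - (∑ i ∈ Cᶜ, r i)) ≤ z C * ((∑ i ∈ Cᶜ, t i) - Y) := by
      intro C _
      by_cases hzc : z C = 0
      · simp [hzc]
      · have := stepA C (hzL C hzc)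
        have h2 : (∑ i ∈ Cᶜ, t i) - (∑ i ∈ Cᶜ, r i) ≤ (∑ i ∈ Cᶜ, t i) - Y := by linarith
        exact mul_le_mul_of_nonneg_left h2 (hz0 C)
    have hsum1 : ∑ C, z C * ((∑ i ∈ Cᶜ, t i) - (∑ i ∈ Cᶜ, r i))
        = ∑ i, (t i - r i) * (1 - t i) := by
      have e : ∀ C ∈ (Finset.univ : Finset (Finset N)),
          z C * ((∑ i ∈ Cᶜ, t i) - (∑ i ∈ Cᶜ, r i))
          = z C * ((∑ i, t i) - (∑ i, r i)) - z C * ∑ i ∈ C, (t i - r i) := by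
        intro C _
        rw [hcompl t C, hcompl r C, Finset.sum_sub_distrib]
        ring
      rw [Finset.sum_congr rfl e, Finset.sum_sub_distrib, ← Finset.sum_mul, hz1, one_mul,
        GameAux.swap2 z (fun i => t i - r i)]
      have e2 : ∀ i ∈ (Finset.univ : Finset N),
          (t i - r i) * ∑ C, z C * GameAux.chi C i = (t i - r i) * t i := by
        intro i _
        rfl
      rw [Finset.sum_congr rfl e2]
      rw [show (∑ i, t i) - (∑ i, r i) = ∑ i, (t i - r i) from (Finset.sum_sub_distrib _ _).symm]
      rw [← Finset.sum_sub_distrib]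
      exact Finset.sum_congr rfl fun i _ => by ring
    have hsum2 : ∑ C, z C * ((∑ i ∈ Cᶜ, t i) - Y) = 0 := by
      have e : ∀ C ∈ (Finset.univ : Finset (Finset N)),
          z C * ((∑ i ∈ Cᶜ, t i) - Y)
          = z C * (∑ i, t i) - z C * (∑ i ∈ C, t i) - z C * Y := by
        intro C _
        rw [hcompl t C]
        ring
      rw [Finset.sum_congr rfl e, Finset.sum_sub_distrib, Finset.sum_sub_distrib,
        ← Finset.sum_mul, ← Finset.sum_mul, hz1, one_mul, one_mul, hzt, hsumt, hsumtt, hYn4]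
      ring
    have hle : ∑ i, (t i - r i) * (1 - t i) ≤ 0 := by
      rw [← hsum1]
      calc ∑ C, z C * ((∑ i ∈ Cᶜ, t i) - (∑ i ∈ Cᶜ, r i))
          ≤ ∑ C, z C * ((∑ i ∈ Cᶜ, t i) - Y) := Finset.sum_le_sum h1
        _ = 0 := hsum2
    have hnn : ∀ i ∈ (Finset.univ : Finset N), 0 ≤ (t i - r i) * (1 - t i) := by
      intro i _
      apply mul_nonneg
      · linarith [hrt i]
      · rw [hthalf i]; norm_num
    have heq0 : ∑ i, (t i - r i) * (1 - t i) = 0 :=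
      le_antisymm hle (Finset.sum_nonneg hnn)
    intro i
    have := (Finset.sum_eq_zero_iff_of_nonneg hnn).mp heq0 i (Finset.mem_univ i)
    have h5 : (1:ℝ) - t i = 1/2 := by rw [hthalf i]; norm_num
    rw [h5] at this
    have h6 : t i - r i = 0 := by
      rcases mul_eq_zero.mp this with h | h
      · exact h
      · norm_num at h
    have := hthalf i
    linarith
  -- Now the convex hull memberships
  constructor
  · -- winning part
    set F : Finset (Finset N) := Finset.univ.filter (fun C => v C = 1) with hF
    have hsubY : ∑ C ∈ F, y C = Y := by
      rw [hY]
      refine Finset.sum_subset (Finset.filter_subset _ _) ?_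
      intro C _ hC
      by_contra hne
      exact hC (Finset.mem_filter.mpr ⟨Finset.mem_univ _, hyW C hne⟩)
    have hpos : 0 < ∑ C ∈ F, y C := by
      rw [hsubY, hYn4]
      linarith
    have hmem := Finset.centerMass_mem_convexHull F
      (fun C _ => hy0 C) hpos
      (s := {x : N → ℝ | ∃ C : Finset N, v C = 1 ∧ x = fun i => if i ∈ C then 1 else 0})
      (z := fun C => (fun i => if i ∈ C then (1:ℝ) else 0))
      (fun C hC => ⟨C, (Finset.mem_filter.mp hC).2, rfl⟩)
    have hcm : F.centerMass y (fun C => (fun i => if i ∈ C then (1:ℝ) else 0))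
        = (fun _ : N => 2 / n) := by
      rw [Finset.centerMass, hsubY]
      have hsub2 : ∑ C ∈ F, y C • (fun i => if i ∈ C then (1:ℝ) else 0)
          = ∑ C, y C • (fun i => if i ∈ C then (1:ℝ) else 0) := by
        refine Finset.sum_subset (Finset.filter_subset _ _) ?_
        intro C _ hC
        have : y C = 0 := by
          by_contra hne
          exact hC (Finset.mem_filter.mpr ⟨Finset.mem_univ _, hyW C hne⟩)
        rw [this, zero_smul]
      rw [hsub2]
      funext i
      rw [Pi.smul_apply, Finset.sum_apply]
      have : ∑ C, (y C • fun i => if i ∈ C then (1:ℝ) else 0) i = r i := by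
        rw [hr]
        exact Finset.sum_congr rfl fun C _ => by simp [GameAux.chi]
      rw [this, stepF i, hYn4, smul_eq_mul]
      field_simp
      ring
    rw [← hcm]
    exact hmem
  · -- losing part
    set F : Finset (Finset N) := Finset.univ.filter (fun C => v C = 0) with hF
    have hsubZ : ∑ C ∈ F, z C = 1 := by
      rw [← hz1]
      refine Finset.sum_subset (Finset.filter_subset _ _) ?_
      intro C _ hC
      by_contra hne
      exact hC (Finset.mem_filter.mpr ⟨Finset.mem_univ _, hzL C hne⟩)
    have hpos : 0 < ∑ C ∈ F, z C := by rw [hsubZ]; norm_num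
    have hmem := Finset.centerMass_mem_convexHull F
      (fun C _ => hz0 C) hpos
      (s := {x : N → ℝ | ∃ C : Finset N, v C = 0 ∧ x = fun i => if i ∈ C then 1 else 0})
      (z := fun C => (fun i => if i ∈ C then (1:ℝ) else 0))
      (fun C hC => ⟨C, (Finset.mem_filter.mp hC).2, rfl⟩)
    have hcm : F.centerMass z (fun C => (fun i => if i ∈ C then (1:ℝ) else 0))
        = (fun _ : N => (1:ℝ)/2) := by
      rw [Finset.centerMass, hsubZ]
      have hsub2 : ∑ C ∈ F, z C • (fun i => if i ∈ C then (1:ℝ) else 0)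
          = ∑ C, z C • (fun i => if i ∈ C then (1:ℝ) else 0) := by
        refine Finset.sum_subset (Finset.filter_subset _ _) ?_
        intro C _ hC
        have : z C = 0 := by
          by_contra hne
          exact hC (Finset.mem_filter.mpr ⟨Finset.mem_univ _, hzL C hne⟩)
        rw [this, zero_smul]
      rw [hsub2]
      funext i
      rw [Pi.smul_apply, Finset.sum_apply]
      have : ∑ C, (z C • fun i => if i ∈ C then (1:ℝ) else 0) i = t i := by
        rw [ht]
        exact Finset.sum_congr rfl fun C _ => by simp [GameAux.chi]
      rw [this, hthalf i, smul_eq_mul]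
      norm_num
    rw [← hcm]
    exact hmem
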